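/- arXiv:1109.0101 — 2 statements merged into one kernel-verified Lean document; each statement's English description precedes it below -/
import Mathlib

section
/- Fix n ≥ 1 and θ > 0 with 0 ≤ γ ≤ θ. Take V = 1 (so ρ(x) = 1 and Ψ_θ(B(x₀,r)) = (1+r)^θ). Then the weight w(x) = (1+|x|)^{-(n+γ)} on ℝⁿ belongs to A_1^{ρ,θ}: there is a constant C such that for every ball B, (1+r)^{-θ}|B|^{-1}∫_B (1+|y|)^{-(n+γ)} dy ≤ C (1+|x|)^{-(n+γ)} for a.e. x ∈ B. -/
open MeasureTheory Metric

noncomputable section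

private lemma aux_rpow_neg {p K a b : ℝ} (hp : 0 ≤ p) (hK : 0 < K) (ha : 0 < a)
    (hb : 0 < b) (h : b ≤ K * a) : a ^ (-p) ≤ K ^ p * b ^ (-p) := by
  have h1 : b ^ p ≤ (K * a) ^ p := Real.rpow_le_rpow hb.le h hp
  have h2 : ((K * a) ^ p)⁻¹ ≤ (b ^ p)⁻¹ :=
    inv_anti₀ (Real.rpow_pos_of_pos hb p) h1
  calc a ^ (-p) = K ^ p * ((K * a) ^ p)⁻¹ := by
        rw [← Real.rpow_neg (by positivity), Real.mul_rpow hK.le ha.le,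
          ← mul_assoc, ← Real.rpow_add hK, add_neg_cancel, Real.rpow_zero, one_mul]
    _ ≤ K ^ p * (b ^ p)⁻¹ := mul_le_mul_of_nonneg_left h2 (by positivity)
    _ = K ^ p * b ^ (-p) := by rw [← Real.rpow_neg hb.le]

/-- with `V = 1` (so `ρ ≡ 1`, `Ψ_θ(B(x₀,r)) = (1+r)^θ`), the weight
`w(x) = (1+|x|)^{-(n+γ)}` belongs to `A_1^{ρ,θ}` whenever `0 ≤ γ ≤ θ`. -/
theorem stmt5 (n : ℕ) (hn : 0 < n) (θ γ : ℝ) (hθ : 0 < θ) (hγ : 0 ≤ γ) (hγθ : γ ≤ θ) :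
    ∃ C : ℝ, 0 < C ∧
      ∀ (x₀ : EuclideanSpace ℝ (Fin n)) (r : ℝ), 0 < r →
        ∀ᵐ x ∂(volume.restrict (ball x₀ r)),
          ((1 + r) ^ θ)⁻¹ * ((volume (ball x₀ r)).toReal)⁻¹ *
              (∫ y in ball x₀ r, (1 + ‖y‖) ^ (-((n : ℝ) + γ)))
            ≤ C * (1 + ‖x‖) ^ (-((n : ℝ) + γ)) := by
  have hn' : (0:ℝ) < n := by exact_mod_cast hn
  set p : ℝ := (n : ℝ) + γ with hp_def
  have hp : 0 < p := by positivity
  have hθγ : 0 ≤ θ - γ := sub_nonneg.2 hγθ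
  set E := EuclideanSpace ℝ (Fin n)
  haveI : Nontrivial (EuclideanSpace ℝ (Fin n)) :=
    Module.nontrivial_of_finrank_pos (R := ℝ) (by rwa [finrank_euclideanSpace_fin])
  have hI : Integrable (fun y : E => (1 + ‖y‖) ^ (-((n:ℝ) + θ))) := by
    apply integrable_one_add_norm
    rw [finrank_euclideanSpace_fin]
    linarith
  set I := ∫ y : E, (1 + ‖y‖) ^ (-((n:ℝ) + θ)) with hI_def
  have hI0 : 0 ≤ I := integral_nonneg fun y => by positivity
  set ω := (volume (ball (0:E) 1)).toReal with hω_def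
  have hω : 0 < ω :=
    ENNReal.toReal_pos (measure_ball_pos _ _ one_pos).ne' measure_ball_lt_top.ne
  refine ⟨3 ^ p + 4 ^ θ * 4 ^ p * (I / ω), by positivity, ?_⟩
  intro x₀ r hr
  have hvol : (volume (ball x₀ r)).toReal = ω * r ^ n := by
    rw [Measure.addHaar_ball volume x₀ hr.le, ENNReal.toReal_mul,
      ENNReal.toReal_ofReal (by positivity), finrank_euclideanSpace_fin, mul_comm]
  have hwcont : Continuous fun y : E => (1 + ‖y‖) ^ (-p) :=
    (continuous_const.add continuous_norm).rpow_const fun y => Or.inl (by simp only [Pi.add_apply]; positivity)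
  have hwint : IntegrableOn (fun y : E => (1 + ‖y‖) ^ (-p)) (ball x₀ r) :=
    (hwcont.continuousOn.integrableOn_compact (isCompact_closedBall x₀ r)).mono_set
      ball_subset_closedBall
  have hb : ∀ z ∈ ball x₀ r, ‖x₀‖ - r ≤ ‖z‖ ∧ ‖z‖ ≤ ‖x₀‖ + r := by
    intro z hz
    have h1 : |‖z‖ - ‖x₀‖| ≤ dist z x₀ := by
      rw [dist_eq_norm]; exact abs_norm_sub_norm_le z x₀
    have h2 := (mem_ball.mp hz).le
    have h3 := abs_le.mp (h1.trans h2)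
    exact ⟨by linarith [h3.1], by linarith [h3.2]⟩
  filter_upwards [ae_restrict_mem measurableSet_ball] with x hx
  have hx1 := hb x hx
  have hv : (0:ℝ) < (volume (ball x₀ r)).toReal := by rw [hvol]; positivity
  by_cases hcase : r ≤ 1 ∨ 2 * r ≤ ‖x₀‖
  · -- pointwise comparison case
    have key : ∀ y ∈ ball x₀ r, (1 + ‖y‖) ^ (-p) ≤ 3 ^ p * (1 + ‖x‖) ^ (-p) := by
      intro y hy
      have hy1 := hb y hy
      have hy0 : (0:ℝ) ≤ ‖y‖ := norm_nonneg y
      apply aux_rpow_neg hp.le (by norm_num) (by positivity) (by positivity)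
      rcases hcase with h | h
      · linarith [hy1.1, hy1.2, hx1.2]
      · linarith [hy1.1, hx1.2]
    have hint : (∫ y in ball x₀ r, (1 + ‖y‖) ^ (-p))
        ≤ (3 ^ p * (1 + ‖x‖) ^ (-p)) * (volume (ball x₀ r)).toReal := by
      calc (∫ y in ball x₀ r, (1 + ‖y‖) ^ (-p))
          ≤ ∫ _y in ball x₀ r, 3 ^ p * (1 + ‖x‖) ^ (-p) :=
            setIntegral_mono_on hwint
              (integrableOn_const measure_ball_lt_top.ne) measurableSet_ball key
        _ = (3 ^ p * (1 + ‖x‖) ^ (-p)) * (volume (ball x₀ r)).toReal := by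
            rw [setIntegral_const, smul_eq_mul, mul_comm, Measure.real]
    have h1r : ((1 + r) ^ θ)⁻¹ ≤ 1 := by
      apply inv_le_one_of_one_le₀
      calc (1:ℝ) = 1 ^ θ := (Real.one_rpow θ).symm
        _ ≤ (1 + r) ^ θ := Real.rpow_le_rpow (by norm_num) (by linarith) hθ.le
    have hwx : (0:ℝ) ≤ (1 + ‖x‖) ^ (-p) := by positivity
    calc ((1 + r) ^ θ)⁻¹ * ((volume (ball x₀ r)).toReal)⁻¹ *
          (∫ y in ball x₀ r, (1 + ‖y‖) ^ (-p))
        ≤ ((1 + r) ^ θ)⁻¹ * ((volume (ball x₀ r)).toReal)⁻¹ *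
          ((3 ^ p * (1 + ‖x‖) ^ (-p)) * (volume (ball x₀ r)).toReal) := by
          apply mul_le_mul_of_nonneg_left hint (by positivity)
      _ = ((1 + r) ^ θ)⁻¹ * (3 ^ p * (1 + ‖x‖) ^ (-p)) := by
          field_simp
      _ ≤ 1 * (3 ^ p * (1 + ‖x‖) ^ (-p)) := by
          apply mul_le_mul_of_nonneg_right h1r (by positivity)
      _ = 3 ^ p * (1 + ‖x‖) ^ (-p) := one_mul _
      _ ≤ (3 ^ p + 4 ^ θ * 4 ^ p * (I / ω)) * (1 + ‖x‖) ^ (-p) := by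
          apply mul_le_mul_of_nonneg_right _ hwx
          have : (0:ℝ) ≤ 4 ^ θ * 4 ^ p * (I / ω) := by positivity
          linarith
  · push_neg at hcase
    obtain ⟨hr1, hx0⟩ := hcase
    have hr1 : (1:ℝ) ≤ r := hr1.le
    have hx0 : ‖x₀‖ ≤ 2 * r := hx0.le
    have hx4 : 1 + ‖x‖ ≤ 4 * r := by linarith [hx1.2]
    -- Step A: integral bound
    have key2 : ∀ y ∈ ball x₀ r,
        (1 + ‖y‖) ^ (-p) ≤ (4*r) ^ (θ - γ) * (1 + ‖y‖) ^ (-((n:ℝ) + θ)) := by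
      intro y hy
      have hy1 := hb y hy
      have hy4 : 1 + ‖y‖ ≤ 4 * r := by linarith [hy1.2]
      have hsplit : (1 + ‖y‖) ^ (-p)
          = (1 + ‖y‖) ^ (θ - γ) * (1 + ‖y‖) ^ (-((n:ℝ) + θ)) := by
        rw [← Real.rpow_add (by positivity)]
        congr 1
        rw [hp_def]; ring
      rw [hsplit]
      apply mul_le_mul_of_nonneg_right _ (by positivity)
      exact Real.rpow_le_rpow (by positivity) hy4 hθγ
    have hintB : (∫ y in ball x₀ r, (1 + ‖y‖) ^ (-p)) ≤ (4*r) ^ (θ - γ) * I := by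
      calc (∫ y in ball x₀ r, (1 + ‖y‖) ^ (-p))
          ≤ ∫ y in ball x₀ r, (4*r) ^ (θ - γ) * (1 + ‖y‖) ^ (-((n:ℝ) + θ)) :=
            setIntegral_mono_on hwint ((hI.const_mul _).integrableOn)
              measurableSet_ball key2
        _ = (4*r) ^ (θ - γ) * ∫ y in ball x₀ r, (1 + ‖y‖) ^ (-((n:ℝ) + θ)) :=
            integral_const_mul _ _
        _ ≤ (4*r) ^ (θ - γ) * I := by
            apply mul_le_mul_of_nonneg_left _ (by positivity)
            exact setIntegral_le_integral hI (Filter.Eventually.of_forall fun y => by positivity)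
    -- arithmetic core
    have main : (r ^ θ)⁻¹ * (ω * r ^ n)⁻¹ * ((4*r) ^ (θ - γ) * I)
        ≤ (4 ^ θ * 4 ^ p * (I / ω)) * (4*r) ^ (-p) := by
      have e3 : (4*r) ^ (θ - γ) = 4 ^ (θ - γ) * r ^ (θ - γ) :=
        Real.mul_rpow (by norm_num) hr.le
      have e4 : (4*r) ^ (-p) = 4 ^ (-p) * r ^ (-p) :=
        Real.mul_rpow (by norm_num) hr.le
      have e5 : r ^ (-θ) * r ^ (-(n:ℝ)) * r ^ (θ - γ) = r ^ (-p) := by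
        rw [← Real.rpow_add hr, ← Real.rpow_add hr]
        congr 1
        rw [hp_def]; ring
      have e6 : (4:ℝ) ^ (-p) * 4 ^ p = 1 := by
        rw [← Real.rpow_add (by norm_num), neg_add_cancel, Real.rpow_zero]
      have e7 : (4:ℝ) ^ (θ - γ) ≤ 4 ^ θ :=
        Real.rpow_le_rpow_of_exponent_le (by norm_num) (by linarith)
      have eθ : (r ^ θ)⁻¹ = r ^ (-θ) := by rw [← Real.rpow_neg hr.le]
      have en : ((r:ℝ) ^ n)⁻¹ = r ^ (-(n:ℝ)) := by
        rw [← Real.rpow_natCast r n, ← Real.rpow_neg hr.le]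
      calc (r ^ θ)⁻¹ * (ω * r ^ n)⁻¹ * ((4*r) ^ (θ - γ) * I)
          = 4 ^ (θ - γ) * (I * ω⁻¹ * (r ^ (-θ) * r ^ (-(n:ℝ)) * r ^ (θ - γ))) := by
            rw [eθ, mul_inv, en, e3]; ring
        _ = 4 ^ (θ - γ) * (I * ω⁻¹ * r ^ (-p)) := by rw [e5]
        _ ≤ 4 ^ θ * (I * ω⁻¹ * r ^ (-p)) :=
            mul_le_mul_of_nonneg_right e7 (by positivity)
        _ = (4 ^ θ * 4 ^ p * (I / ω)) * (4*r) ^ (-p) := by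
            rw [e4, div_eq_mul_inv]
            linear_combination (-((4:ℝ) ^ θ * I * ω⁻¹ * r ^ (-p))) * e6
    have hxlow : (4*r) ^ (-p) ≤ (1 + ‖x‖) ^ (-p) := by
      have := aux_rpow_neg hp.le one_pos (by positivity : (0:ℝ) < 4*r)
        (by positivity : (0:ℝ) < 1 + ‖x‖) (by linarith)
      rwa [Real.one_rpow, one_mul] at this
    have hinv : ((1 + r) ^ θ)⁻¹ ≤ (r ^ θ)⁻¹ := by
      apply inv_anti₀ (Real.rpow_pos_of_pos hr θ)
      exact Real.rpow_le_rpow hr.le (by linarith) hθ.le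
    have hnonnegI : (0:ℝ) ≤ (4*r) ^ (θ - γ) * I := by positivity
    calc ((1 + r) ^ θ)⁻¹ * ((volume (ball x₀ r)).toReal)⁻¹ *
          (∫ y in ball x₀ r, (1 + ‖y‖) ^ (-p))
        ≤ ((1 + r) ^ θ)⁻¹ * ((volume (ball x₀ r)).toReal)⁻¹ * ((4*r) ^ (θ - γ) * I) :=
          mul_le_mul_of_nonneg_left hintB (by positivity)
      _ ≤ (r ^ θ)⁻¹ * (ω * r ^ n)⁻¹ * ((4*r) ^ (θ - γ) * I) := by
          rw [hvol]
          apply mul_le_mul_of_nonneg_right _ hnonnegI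
          exact mul_le_mul_of_nonneg_right hinv (by positivity)
      _ ≤ (4 ^ θ * 4 ^ p * (I / ω)) * (4*r) ^ (-p) := main
      _ ≤ (4 ^ θ * 4 ^ p * (I / ω)) * (1 + ‖x‖) ^ (-p) :=
          mul_le_mul_of_nonneg_left hxlow (by positivity)
      _ ≤ (3 ^ p + 4 ^ θ * 4 ^ p * (I / ω)) * (1 + ‖x‖) ^ (-p) := by
          apply mul_le_mul_of_nonneg_right _ (by positivity)
          have : (0:ℝ) < (3:ℝ) ^ p := by positivity
          linarith
end
end

section
/- Let f be locally integrable on ℝⁿ, θ > 0, and 0 < δ < 1. Suppose M_{V,θ}f is finite a.e. Then (M_{V,θ}f)^δ is an A_1^{ρ,θ} weight: there exists a constant C (depending only on n, θ, δ) such that for every cube Q and almost every x ∈ Q, (Ψ_θ(Q)|Q|)^{-1} ∫_Q (M_{V,θ}f(y))^δ dy ≤ C (M_{V,θ}f(x))^δ. -/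
open MeasureTheory Metric ENNReal

noncomputable section

/-- Axis-parallel cube centered at `x` with sidelength `r`. -/
def cube {n : ℕ} (x : EuclideanSpace ℝ (Fin n)) (r : ℝ) : Set (EuclideanSpace ℝ (Fin n)) :=
  {y | ∀ i, |y i - x i| ≤ r / 2}

/-- The localized maximal operator `M_{V,θ}` over cubes, with values in `ℝ≥0∞`. -/
def MVcube {n : ℕ} (ρ : EuclideanSpace ℝ (Fin n) → ℝ) (θ : ℝ)
    (f : EuclideanSpace ℝ (Fin n) → ℝ) (x : EuclideanSpace ℝ (Fin n)) : ℝ≥0∞ :=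
  ⨆ (z : EuclideanSpace ℝ (Fin n)) (r : ℝ) (_ : 0 < r ∧ x ∈ cube z r),
    (ENNReal.ofReal ((1 + r / ρ z) ^ θ) * volume (cube z r))⁻¹ *
      ∫⁻ y in cube z r, ENNReal.ofReal |f y|

variable {n : ℕ}

lemma cube_eq_preimage (z : EuclideanSpace ℝ (Fin n)) (r : ℝ) :
    cube z r = ((MeasurableEquiv.toLp 2 (Fin n → ℝ)).symm) ⁻¹'
      (Set.univ.pi fun i => Set.Icc (z i - r/2) (z i + r/2)) := by
  ext y
  simp only [cube, Set.mem_setOf_eq, Set.mem_preimage, Set.mem_pi, Set.mem_univ, true_implies,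
    Set.mem_Icc, MeasurableEquiv.coe_toLp_symm]
  constructor
  · intro h i
    have := abs_le.1 (h i)
    constructor <;> [linarith [this.1]; linarith [this.2]]
  · intro h i
    rw [abs_le]
    constructor <;> [linarith [(h i).1]; linarith [(h i).2]]

lemma volume_cube (z : EuclideanSpace ℝ (Fin n)) (r : ℝ)  :
    volume (cube z r) = (ENNReal.ofReal r) ^ n := by
  rw [cube_eq_preimage]
  rw [(EuclideanSpace.volume_preserving_symm_measurableEquiv_toLp (Fin n)).measure_preimage
    (MeasurableSet.univ_pi (fun i => measurableSet_Icc)).nullMeasurableSet]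
  rw [volume_pi_pi]
  simp only [Real.volume_Icc]
  rw [Finset.prod_congr rfl (fun i _ => by rw [show z i + r/2 - (z i - r/2) = r by ring])]
  simp [Finset.prod_const]

lemma isClosed_cube (z : EuclideanSpace ℝ (Fin n)) (r : ℝ) : IsClosed (cube z r) := by
  have : cube z r = ⋂ i, {y : EuclideanSpace ℝ (Fin n) | |y i - z i| ≤ r / 2} := by
    ext y; simp [cube]
  rw [this]
  refine isClosed_iInter fun i => ?_
  have hc : Continuous fun y : EuclideanSpace ℝ (Fin n) => |y i - z i| :=
    (((continuous_apply i).comp (PiLp.continuousLinearEquiv 2 ℝ _).continuous).sub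
      continuous_const).abs
  exact isClosed_le hc continuous_const

lemma measurableSet_cube (z : EuclideanSpace ℝ (Fin n)) (r : ℝ) : MeasurableSet (cube z r) :=
  (isClosed_cube z r).measurableSet

lemma mem_cube_self (z : EuclideanSpace ℝ (Fin n)) {r : ℝ} (hr : 0 ≤ r) : z ∈ cube z r := by
  intro i; simpa using by positivity

lemma cube_mono (z : EuclideanSpace ℝ (Fin n)) {r r' : ℝ} (h : r ≤ r') :
    cube z r ⊆ cube z r' := fun y hy i => (hy i).trans (by linarith)

lemma abs_coord_le_norm (y : EuclideanSpace ℝ (Fin n)) (i : Fin n) : |y i| ≤ ‖y‖ := by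
  rw [EuclideanSpace.norm_eq]
  have h1 : |y i| = Real.sqrt (‖y i‖ ^ 2) := by
    rw [Real.sqrt_sq_eq_abs]; simp
  rw [h1]
  apply Real.sqrt_le_sqrt
  exact Finset.single_le_sum (f := fun j => ‖y j‖ ^ 2) (fun j _ => by positivity)
    (Finset.mem_univ i)

lemma ball_subset_cube (z : EuclideanSpace ℝ (Fin n)) (r : ℝ) :
    Metric.ball z (r/2) ⊆ cube z r := by
  intro y hy i
  have h1 : |(y - z) i| ≤ ‖y - z‖ := abs_coord_le_norm _ i
  have h2 : (y - z) i = y i - z i := rfl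
  rw [h2] at h1
  have := mem_ball_iff_norm.1 hy
  exact h1.trans this.le

lemma isCompact_cube (z : EuclideanSpace ℝ (Fin n)) (r : ℝ) : IsCompact (cube z r) := by
  rw [cube_eq_preimage]
  exact (Homeomorph.isCompact_preimage
    (PiLp.continuousLinearEquiv 2 ℝ (fun _ : Fin n => ℝ)).toHomeomorph).2
    (isCompact_univ_pi fun i => isCompact_Icc)

/-- rational cube data -/
def rcenter {n : ℕ} (p : (Fin n → ℚ) × ℚ) : EuclideanSpace ℝ (Fin n) := WithLp.toLp 2 (fun i => (p.1 i : ℝ))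

def rcube {n : ℕ} (p : (Fin n → ℚ) × ℚ) : Set (EuclideanSpace ℝ (Fin n)) :=
  cube (rcenter p) (p.2 : ℝ)

/-- The plain (unweighted) maximal function over rational cubes. -/
def Mq {n : ℕ} (f : EuclideanSpace ℝ (Fin n) → ℝ) (x : EuclideanSpace ℝ (Fin n)) : ℝ≥0∞ :=
  ⨆ p : (Fin n → ℚ) × ℚ, (rcube p).indicator
    (fun _ => (volume (rcube p))⁻¹ * ∫⁻ y in rcube p, ENNReal.ofReal |f y|) x

lemma measurable_Mq (f : EuclideanSpace ℝ (Fin n) → ℝ) : Measurable (Mq f) := by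
  refine Measurable.iSup fun p => ?_
  exact (measurable_const).indicator (measurableSet_cube _ _)

lemma MVcube_le_Mq (ρ : EuclideanSpace ℝ (Fin n) → ℝ) (hρ : ∀ x, 0 < ρ x) (θ : ℝ) (hθ : 0 ≤ θ)
    (f : EuclideanSpace ℝ (Fin n) → ℝ) (x : EuclideanSpace ℝ (Fin n)) :
    MVcube ρ θ f x ≤ 2 ^ n * Mq f x := by
  refine iSup_le fun z => iSup_le fun r => iSup_le fun hzr => ?_
  obtain ⟨hr, hx⟩ := hzr
  -- choose rational cube
  obtain ⟨r', hr'1, hr'2⟩ := exists_rat_btwn (show (3/2 : ℝ) * r < 2 * r by linarith)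
  have hzi : ∀ i : Fin n, ∃ q : ℚ, z i - r/4 < (q:ℝ) ∧ (q:ℝ) < z i + r/4 := fun i =>
    exists_rat_btwn (by linarith)
  choose q hq1 hq2 using hzi
  set p : (Fin n → ℚ) × ℚ := (q, r')
  have hsub : cube z r ⊆ rcube p := by
    intro y hy i
    have h1 : |y i - z i| ≤ r/2 := hy i
    have h2 : |z i - (q i : ℝ)| ≤ r/4 := by
      rw [abs_le]; constructor <;> [linarith [hq2 i]; linarith [hq1 i]]
    calc |y i - rcenter p i| = |(y i - z i) + (z i - (q i:ℝ))| := by rw [rcenter]; ring_nf; rfl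
      _ ≤ |y i - z i| + |z i - (q i:ℝ)| := abs_add_le _ _
      _ ≤ r/2 + r/4 := add_le_add h1 h2
      _ ≤ (r':ℝ)/2 := by linarith
  have hxp : x ∈ rcube p := hsub hx
  have hone : (1:ℝ) ≤ 1 + r / ρ z := by
    have : (0:ℝ) < r / ρ z := div_pos hr (hρ z); linarith
  have hΨ : (1:ℝ≥0∞) ≤ ENNReal.ofReal ((1 + r / ρ z) ^ θ) := by
    rw [show (1:ℝ≥0∞) = ENNReal.ofReal 1 by simp]
    exact ENNReal.ofReal_le_ofReal (Real.one_le_rpow hone hθ)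
  -- volume comparison
  have hvol : volume (rcube p) ≤ 2 ^ n * volume (cube z r) := by
    rw [rcube, volume_cube, volume_cube]
    calc (ENNReal.ofReal (r':ℝ)) ^ n ≤ (ENNReal.ofReal (2*r)) ^ n :=
          pow_le_pow_left' (ENNReal.ofReal_le_ofReal hr'2.le) n
      _ = 2 ^ n * ENNReal.ofReal r ^ n := by
          rw [ENNReal.ofReal_mul (by norm_num), mul_pow]
          norm_num
  have hIle : (∫⁻ y in cube z r, ENNReal.ofReal |f y|) ≤
      ∫⁻ y in rcube p, ENNReal.ofReal |f y| :=
    lintegral_mono_set hsub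
  have hterm : (volume (rcube p))⁻¹ * ∫⁻ y in rcube p, ENNReal.ofReal |f y| ≤ Mq f x := by
    refine le_iSup_of_le p ?_
    rw [Set.indicator_of_mem hxp]
  have hvpos : volume (cube z r) ≠ 0 := by
    rw [volume_cube]
    exact pow_ne_zero n (ENNReal.ofReal_pos.2 hr).ne'
  calc (ENNReal.ofReal ((1 + r / ρ z) ^ θ) * volume (cube z r))⁻¹ *
        ∫⁻ y in cube z r, ENNReal.ofReal |f y|
      ≤ (volume (cube z r))⁻¹ * ∫⁻ y in rcube p, ENNReal.ofReal |f y| := by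
        refine mul_le_mul' ?_ hIle
        exact ENNReal.inv_le_inv.2 (le_mul_of_one_le_left (zero_le) hΨ)
    _ ≤ 2 ^ n * (volume (rcube p))⁻¹ * ∫⁻ y in rcube p, ENNReal.ofReal |f y| := by
        refine mul_le_mul' ?_ (le_refl _)
        have h2 : ((2:ℝ≥0∞)^n) ≠ 0 := pow_ne_zero n two_ne_zero
        have h2t : ((2:ℝ≥0∞)^n) ≠ ⊤ := ENNReal.pow_ne_top ENNReal.ofNat_ne_top
        have key : volume (rcube p) * ((2:ℝ≥0∞)^n)⁻¹ ≤ volume (cube z r) := by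
          calc volume (rcube p) * ((2:ℝ≥0∞)^n)⁻¹
              ≤ (2^n * volume (cube z r)) * (2^n)⁻¹ := mul_le_mul' hvol le_rfl
            _ = volume (cube z r) := by
                rw [mul_comm ((2:ℝ≥0∞)^n) _, mul_assoc, ENNReal.mul_inv_cancel h2 h2t, mul_one]
        calc (volume (cube z r))⁻¹ ≤ (volume (rcube p) * ((2:ℝ≥0∞)^n)⁻¹)⁻¹ :=
              ENNReal.inv_le_inv.2 key
          _ = 2^n * (volume (rcube p))⁻¹ := by
              rw [ENNReal.mul_inv (Or.inr (ENNReal.inv_ne_top.2 h2)) (Or.inr (ENNReal.inv_ne_zero.2 h2t)), inv_inv,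
                mul_comm]
    _ ≤ 2 ^ n * Mq f x := by rw [mul_assoc]; exact mul_le_mul' (le_refl _) hterm

lemma cube_subset_of_inter {z1 z2 : EuclideanSpace ℝ (Fin n)} {r1 r2 : ℝ}
    (h : (cube z1 r1 ∩ cube z2 r2).Nonempty) (hr : r1 ≤ 2 * r2) :
    cube z1 r1 ⊆ cube z2 (5 * r2) := by
  obtain ⟨w, hw1, hw2⟩ := h
  intro y hy i
  have h1 := hy i
  have h2 := hw1 i
  have h3 := hw2 i
  have : |y i - z2 i| ≤ |y i - z1 i| + |z1 i - w i| + |w i - z2 i| := by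
    calc |y i - z2 i| = |(y i - z1 i) + (z1 i - w i) + (w i - z2 i)| := by ring_nf
      _ ≤ _ := by
          exact (abs_add_le _ _).trans (add_le_add_left (abs_add_le _ _) _)
  have h2' : |z1 i - w i| ≤ r1 / 2 := by rw [abs_sub_comm]; exact h2
  linarith

lemma vol_rcube_lt_top (p : (Fin n → ℚ) × ℚ) : volume (rcube p) < ⊤ := by
  rw [rcube, volume_cube]
  exact ENNReal.pow_lt_top ENNReal.ofReal_lt_top

set_option maxHeartbeats 2000000 in
lemma weak11_Mq (f : EuclideanSpace ℝ (Fin n) → ℝ) {lam : ℝ≥0∞} (hl0 : lam ≠ 0) (hlt : lam ≠ ⊤) :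
    volume {x | lam < Mq f x} ≤ 5 ^ n * lam⁻¹ * ∫⁻ y, ENNReal.ofReal |f y| := by
  set I := ∫⁻ y, ENNReal.ofReal |f y| with hI
  by_cases hItop : I = ⊤
  · rw [hItop]
    rw [ENNReal.mul_top (by simp [pow_ne_zero, ENNReal.inv_ne_zero.2 hlt])]
    exact le_top
  set T : Set ((Fin n → ℚ) × ℚ) :=
    {p | lam * volume (rcube p) < ∫⁻ y in rcube p, ENNReal.ofReal |f y|} with hT
  -- basic facts about elements of T
  have hTvol : ∀ p ∈ T, volume (rcube p) ≠ 0 := by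
    intro p hp
    intro h0
    have : (∫⁻ y in rcube p, ENNReal.ofReal |f y|) = 0 := by
      rw [Measure.restrict_eq_zero.2 h0, lintegral_zero_measure]
    rw [hT, Set.mem_setOf_eq, this, h0, mul_zero] at hp
    exact (lt_irrefl 0 hp)
  have hTle : ∀ p ∈ T, volume (rcube p) ≤ lam⁻¹ * ∫⁻ y in rcube p, ENNReal.ofReal |f y| := by
    intro p hp
    have h1 : volume (rcube p) = lam⁻¹ * (lam * volume (rcube p)) := by
      rw [← mul_assoc, ENNReal.inv_mul_cancel hl0 hlt, one_mul]
    rw [h1]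
    exact mul_le_mul' le_rfl (le_of_lt hp)
  -- cover
  have hcover : {x | lam < Mq f x} ⊆ ⋃ p ∈ T, rcube p := by
    intro x hx
    rw [Set.mem_setOf_eq, Mq, lt_iSup_iff] at hx
    obtain ⟨p, hp⟩ := hx
    by_cases hxp : x ∈ rcube p
    · rw [Set.indicator_of_mem hxp] at hp
      have hvol0 : volume (rcube p) ≠ 0 := by
        intro h0
        have : (∫⁻ y in rcube p, ENNReal.ofReal |f y|) = 0 := by
          rw [Measure.restrict_eq_zero.2 h0, lintegral_zero_measure]
        rw [this, mul_zero] at hp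
        simp at hp
      have hvolt : volume (rcube p) ≠ ⊤ := (vol_rcube_lt_top p).ne
      have hpT : p ∈ T := by
        rw [hT, Set.mem_setOf_eq]
        have := ENNReal.mul_lt_mul_left hvol0 hvolt hp
        calc lam * volume (rcube p) < ((volume (rcube p))⁻¹ *
              (∫⁻ y in rcube p, ENNReal.ofReal |f y|)) * volume (rcube p) := by
              rw [mul_comm lam _] at this ⊢; exact this
          _ = ∫⁻ y in rcube p, ENNReal.ofReal |f y| := by
              rw [mul_comm _ (volume (rcube p)), ← mul_assoc,
                ENNReal.mul_inv_cancel hvol0 hvolt, one_mul]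
      exact Set.mem_biUnion hpT hxp
    · rw [Set.indicator_of_notMem hxp] at hp
      exact absurd hp (by simp)
  -- split on n = 0
  rcases Nat.eq_zero_or_pos n with hn | hn
  · -- n = 0 : the whole space has volume 1
    subst hn
    rcases Set.eq_empty_or_nonempty {x | lam < Mq f x} with he | ⟨x, hx⟩
    · rw [he]; simp
    · obtain ⟨p, hpT, -⟩ : ∃ p ∈ T, x ∈ rcube p := by
        simpa using hcover hx
      have hlamI : lam < I := by
        calc lam = lam * volume (rcube p) := by
              rw [rcube, volume_cube]; simp
          _ < ∫⁻ y in rcube p, ENNReal.ofReal |f y| := hpT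
          _ ≤ I := lintegral_mono_set (Set.subset_univ _) |>.trans (by rw [Measure.restrict_univ])
      have h1 : (1:ℝ≥0∞) ≤ lam⁻¹ * I := by
        calc (1:ℝ≥0∞) = lam⁻¹ * lam := (ENNReal.inv_mul_cancel hl0 hlt).symm
          _ ≤ lam⁻¹ * I := mul_le_mul' le_rfl hlamI.le
      calc volume {x | lam < Mq f x} ≤ volume (Set.univ : Set (EuclideanSpace ℝ (Fin 0))) :=
            measure_mono (Set.subset_univ _)
        _ ≤ 1 := by
            have : (Set.univ : Set (EuclideanSpace ℝ (Fin 0))) = cube 0 1 := by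
              ext y; simp [cube]
            rw [this, volume_cube]; simp
        _ ≤ 5 ^ 0 * lam⁻¹ * I := by simpa using h1
  -- n ≥ 1
  have hTpos : ∀ p ∈ T, 0 < ((p.2 : ℝ)) := by
    intro p hp
    have := hTvol p hp
    rw [rcube, volume_cube] at this
    by_contra hle
    push_neg at hle
    exact this (by rw [ENNReal.ofReal_eq_zero.2 hle, zero_pow hn.ne'])
  -- uniform radius bound
  set V := lam⁻¹ * I with hV
  have hVtop : V ≠ ⊤ := by
    rw [hV]
    exact ENNReal.mul_ne_top (ENNReal.inv_ne_top.2 hl0) hItop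
  set R : ℝ := max 1 V.toReal + 1 with hR
  have hTrad : ∀ p ∈ T, ((p.2 : ℝ)) ≤ R := by
    intro p hp
    by_contra hgt
    push_neg at hgt
    have h1r : (1:ℝ) ≤ (p.2:ℝ) := by
      have : (1:ℝ) ≤ R := by rw [hR]; have := le_max_left 1 V.toReal; linarith
      linarith
    have hvleV : volume (rcube p) ≤ V := by
      calc volume (rcube p) ≤ lam⁻¹ * ∫⁻ y in rcube p, ENNReal.ofReal |f y| := hTle p hp
        _ ≤ V := mul_le_mul' le_rfl (lintegral_mono_set (Set.subset_univ _) |>.trans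
            (by rw [Measure.restrict_univ]))
    have hor : ENNReal.ofReal ((p.2:ℝ)) ≤ volume (rcube p) := by
      rw [rcube, volume_cube]
      exact le_self_pow₀ (by simpa using ENNReal.ofReal_le_ofReal h1r) hn.ne'
    have : ENNReal.ofReal ((p.2:ℝ)) ≤ V := hor.trans hvleV
    have hcon : (p.2:ℝ) ≤ V.toReal := by
      rw [← ENNReal.ofReal_le_iff_le_toReal hVtop] at *
      exact this
    have : V.toReal ≤ max 1 V.toReal := le_max_right _ _
    linarith [hgt]
  -- Vitali
  obtain ⟨u, huT, hdisj, hcov⟩ := Vitali.exists_disjoint_subfamily_covering_enlargement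
    (B := fun p : (Fin n → ℚ) × ℚ => rcube p) T (fun p => (p.2 : ℝ)) 2 one_lt_two
    (fun p hp => (hTpos p hp).le) R hTrad
    (fun p hp => ⟨rcenter p, mem_cube_self _ (hTpos p hp).le⟩)
  have hucount : u.Countable := by
    refine hdisj.countable_of_nonempty_interior fun p hp => ?_
    have hpos := hTpos p (huT hp)
    refine ⟨rcenter p, ?_⟩
    have : Metric.ball (rcenter p) ((p.2:ℝ)/2) ⊆ interior (rcube p) := by
      rw [← (Metric.isOpen_ball).interior_eq]
      exact interior_mono (ball_subset_cube _ _)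
    exact this (Metric.mem_ball_self (by linarith))
  have := hucount.to_subtype
  -- covering estimate
  set G : ((Fin n → ℚ) × ℚ) → Set (EuclideanSpace ℝ (Fin n)) :=
    fun p => cube (rcenter p) (5 * (p.2:ℝ)) with hG
  have hbig : (⋃ p ∈ T, rcube p) ⊆ ⋃ b ∈ u, G b := by
    intro x hx
    rw [Set.mem_iUnion₂] at hx
    obtain ⟨p, hpT, hxp⟩ := hx
    obtain ⟨b, hbu, hinter, hle⟩ := hcov p hpT
    exact Set.mem_biUnion hbu (cube_subset_of_inter hinter hle hxp)
  have step1 : volume {x | lam < Mq f x} ≤ ∑' b : u, volume (G b) :=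
    (measure_mono (hcover.trans hbig)).trans (measure_biUnion_le volume hucount G)
  have step2 : ∀ b : u, volume (G (b:(Fin n → ℚ) × ℚ)) ≤
      5 ^ n * (lam⁻¹ * ∫⁻ y in rcube (b:(Fin n → ℚ) × ℚ), ENNReal.ofReal |f y|) := by
    intro b
    have h5 : volume (G (b:(Fin n → ℚ) × ℚ)) = 5 ^ n * volume (rcube (b:(Fin n → ℚ) × ℚ)) := by
      rw [hG]
      simp only []
      rw [volume_cube, rcube, volume_cube, ENNReal.ofReal_mul (by norm_num), mul_pow]
      norm_num
    rw [h5]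
    exact mul_le_mul' le_rfl (hTle _ (huT b.2))
  have step3 : ∑' b : u, (lam⁻¹ * ∫⁻ y in rcube (b:(Fin n → ℚ) × ℚ), ENNReal.ofReal |f y|)
      ≤ lam⁻¹ * I := by
    rw [ENNReal.tsum_mul_left]
    refine mul_le_mul' le_rfl ?_
    have hpd : Pairwise (Function.onFun Disjoint fun b : u => rcube (b:(Fin n → ℚ) × ℚ)) := by
      intro b c hbc
      exact hdisj b.2 c.2 (fun h => hbc (Subtype.ext h))
    calc ∑' b : u, ∫⁻ y in rcube (b:(Fin n → ℚ) × ℚ), ENNReal.ofReal |f y|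
        = ∫⁻ y in ⋃ b : u, rcube (b:(Fin n → ℚ) × ℚ), ENNReal.ofReal |f y| :=
          (lintegral_iUnion (fun b : u => measurableSet_cube _ _) hpd _).symm
      _ ≤ I := lintegral_mono_set (Set.subset_univ _) |>.trans (by rw [Measure.restrict_univ])
  calc volume {x | lam < Mq f x} ≤ ∑' b : u, volume (G b) := step1
    _ ≤ ∑' b : u, 5 ^ n * (lam⁻¹ * ∫⁻ y in rcube (b:(Fin n → ℚ) × ℚ), ENNReal.ofReal |f y|) :=
        ENNReal.tsum_le_tsum step2
    _ = 5 ^ n * ∑' b : u, (lam⁻¹ * ∫⁻ y in rcube (b:(Fin n → ℚ) × ℚ), ENNReal.ofReal |f y|) :=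
        ENNReal.tsum_mul_left
    _ ≤ 5 ^ n * (lam⁻¹ * I) := mul_le_mul' le_rfl step3
    _ = 5 ^ n * lam⁻¹ * I := by rw [mul_assoc]

lemma geom_lt_one {δ : ℝ} (hδ₁ : δ < 1) : (2:ℝ≥0∞) ^ (δ - 1) < 1 := by
  have := ENNReal.rpow_lt_rpow_of_exponent_lt (x := 2) one_lt_two ENNReal.ofNat_ne_top
    (show δ - 1 < 0 by linarith)
  simpa using this

/-- Kolmogorov-type inequality. -/
lemma kolmogorov {α : Type*} [MeasurableSpace α] {μ : Measure α}
    {h : α → ℝ≥0∞} (hm : Measurable h) {K : ℝ≥0∞} (hK0 : K ≠ 0) (hKt : K ≠ ⊤)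
    (hweak : ∀ lam : ℝ≥0∞, lam ≠ 0 → lam ≠ ⊤ → μ {x | lam < h x} ≤ K * lam⁻¹)
    {Q : Set α} (hQ0 : μ Q ≠ 0) (hQt : μ Q ≠ ⊤)
    {δ : ℝ} (hδ₀ : 0 < δ) (hδ₁ : δ < 1) :
    ∫⁻ y in Q, (h y) ^ δ ∂μ ≤
      (1 + 2 ^ δ * (1 - (2:ℝ≥0∞) ^ (δ - 1))⁻¹) * K ^ δ * (μ Q) ^ (1 - δ) := by
  classical
  set t : ℝ≥0∞ := K * (μ Q)⁻¹ with ht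
  have ht0 : t ≠ 0 := by
    rw [ht]; exact mul_ne_zero hK0 (ENNReal.inv_ne_zero.2 hQt)
  have htt : t ≠ ⊤ := by
    rw [ht]; exact ENNReal.mul_ne_top hKt (ENNReal.inv_ne_top.2 hQ0)
  set s : ℕ → Set α := fun k => {y | t * 2 ^ k < h y} with hs
  have hsm : ∀ k, MeasurableSet (s k) := fun k => measurableSet_lt measurable_const hm
  have hlam : ∀ k : ℕ, (t * 2 ^ k) ≠ 0 ∧ (t * 2 ^ k) ≠ ⊤ := fun k =>
    ⟨mul_ne_zero ht0 (pow_ne_zero k two_ne_zero),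
     ENNReal.mul_ne_top htt (ENNReal.pow_ne_top ENNReal.ofNat_ne_top)⟩
  -- pointwise bound
  have hpt : ∀ x, (h x) ^ δ ≤
      t ^ δ + ∑' k : ℕ, (t * 2 ^ (k+1)) ^ δ * (s k).indicator (fun _ => (1:ℝ≥0∞)) x := by
    intro x
    by_cases hx1 : h x ≤ t
    · exact le_add_right (ENNReal.rpow_le_rpow hx1 hδ₀.le)
    push_neg at hx1
    have key : ∀ k : ℕ, t * 2 ^ k < h x → h x ≤ t * 2 ^ (k+1) →
        (h x) ^ δ ≤ t ^ δ + ∑' k : ℕ, (t * 2 ^ (k+1)) ^ δ * (s k).indicator (fun _ => (1:ℝ≥0∞)) x := by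
      intro k hk1 hk2
      have hxk : x ∈ s k := hk1
      have : (h x) ^ δ ≤ (t * 2 ^ (k+1)) ^ δ * (s k).indicator (fun _ => (1:ℝ≥0∞)) x := by
        rw [Set.indicator_of_mem hxk, mul_one]
        exact ENNReal.rpow_le_rpow hk2 hδ₀.le
      exact le_add_left (this.trans (ENNReal.le_tsum (f := fun k => (t * 2 ^ (k+1)) ^ δ * (s k).indicator (fun _ => (1:ℝ≥0∞)) x) k))
    by_cases hx2 : h x = ⊤
    · -- the sum is infinite
      have hall : ∀ k : ℕ, x ∈ s k := fun k => by
        rw [hs]; exact Set.mem_setOf_eq ▸ (hx2 ▸ lt_top_iff_ne_top.2 (hlam k).2)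
      have hsum : (∑' k : ℕ, (t * 2 ^ (k+1)) ^ δ * (s k).indicator (fun _ => (1:ℝ≥0∞)) x) = ⊤ := by
        rw [eq_top_iff]
        calc (⊤:ℝ≥0∞) = ∑' _ : ℕ, t ^ δ :=
              (ENNReal.tsum_const_eq_top_of_ne_zero
                ((ENNReal.rpow_pos (bot_lt_iff_ne_bot.2 ht0) htt).ne')).symm
          _ ≤ _ := by
              refine ENNReal.tsum_le_tsum fun k => ?_
              rw [Set.indicator_of_mem (hall k), mul_one]
              exact ENNReal.rpow_le_rpow (le_mul_of_le_of_one_le le_rfl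
                (one_le_pow_of_one_le' (a := (2:ℝ≥0∞)) one_le_two (k+1))) hδ₀.le
      rw [hsum]
      exact le_add_left le_top
    -- finite case: find minimal k
    have hex : ∃ k : ℕ, h x ≤ t * 2 ^ (k+1) := by
      obtain ⟨m, hm'⟩ := ENNReal.exists_nat_gt (ENNReal.div_lt_top hx2 ht0).ne
      refine ⟨m, ?_⟩
      have h1 : h x = t * (h x / t) := (ENNReal.mul_div_cancel' (fun h => absurd h ht0) (fun h => absurd h htt)).symm
      have h2 : (m:ℝ≥0∞) ≤ 2 ^ (m+1) := by
        calc (m:ℝ≥0∞) ≤ 2^m := by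
              exact_mod_cast (Nat.cast_le (α := ℝ≥0∞)).2 (Nat.lt_two_pow_self (n := m)).le
          _ ≤ 2^(m+1) := pow_le_pow_right' one_le_two (Nat.le_succ m)
      calc h x = t * (h x / t) := h1
        _ ≤ t * m := mul_le_mul' le_rfl hm'.le
        _ ≤ t * 2 ^ (m+1) := mul_le_mul' le_rfl h2
    set k := Nat.find hex with hk
    have hk2 : h x ≤ t * 2 ^ (k+1) := Nat.find_spec hex
    have hk1 : t * 2 ^ k < h x := by
      rcases Nat.eq_zero_or_pos k with h0 | hpos
      · rw [h0]; simpa using hx1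
      · have hmin := Nat.find_min hex (m := k - 1) (by omega)
        push_neg at hmin
        have hkk : k - 1 + 1 = k := by omega
        rwa [hkk] at hmin
    exact key k hk1 hk2
  -- integrate the pointwise bound
  have hmeas : ∀ k : ℕ, Measurable fun y =>
      (t * 2 ^ (k+1)) ^ δ * (s k).indicator (fun _ => (1:ℝ≥0∞)) y := fun k =>
    (measurable_const.indicator (hsm k)).const_mul _
  have hint : ∫⁻ y in Q, (h y) ^ δ ∂μ ≤ t ^ δ * μ Q +
      ∑' k : ℕ, (t * 2 ^ (k+1)) ^ δ * (K * (t * 2 ^ k)⁻¹) := by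
    calc ∫⁻ y in Q, (h y) ^ δ ∂μ
        ≤ ∫⁻ y in Q, (t ^ δ +
            ∑' k : ℕ, (t * 2 ^ (k+1)) ^ δ * (s k).indicator (fun _ => (1:ℝ≥0∞)) y) ∂μ :=
          lintegral_mono fun y => hpt y
      _ = t ^ δ * μ Q +
            ∫⁻ y in Q, (∑' k : ℕ, (t * 2 ^ (k+1)) ^ δ *
              (s k).indicator (fun _ => (1:ℝ≥0∞)) y) ∂μ := by
          rw [lintegral_add_left measurable_const, setLIntegral_const]
      _ ≤ _ := by
          refine add_le_add_right ?_ _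
          rw [lintegral_tsum (fun k => (hmeas k).aemeasurable)]
          refine ENNReal.tsum_le_tsum fun k => ?_
          rw [lintegral_const_mul _ (measurable_const.indicator (hsm k))]
          refine mul_le_mul' le_rfl ?_
          have hind : ∫⁻ a in Q, (s k).indicator (fun _ => (1:ℝ≥0∞)) a ∂μ
              = μ.restrict Q (s k) := by
            exact lintegral_indicator_one (μ := μ.restrict Q) (hsm k)
          rw [hind, Measure.restrict_apply (hsm k)]
          exact (measure_mono (Set.inter_subset_left)).trans
            (hweak _ (hlam k).1 (hlam k).2)
  -- compute the sum
  have hterm : ∀ k : ℕ, (t * 2 ^ (k+1)) ^ δ * (K * (t * 2 ^ k)⁻¹)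
      = (t ^ δ * t⁻¹ * K * (2:ℝ≥0∞) ^ δ) * ((2:ℝ≥0∞) ^ (δ-1)) ^ k := by
    intro k
    have l1 : (t * 2 ^ (k+1)) ^ δ = t ^ δ * (2:ℝ≥0∞) ^ ((((k:ℝ))+1) * δ) := by
      rw [← ENNReal.rpow_natCast 2 (k+1)]
      push_cast
      rw [ENNReal.mul_rpow_of_ne_top htt (by
        exact ENNReal.rpow_ne_top_of_nonneg (by positivity) ENNReal.ofNat_ne_top),
        ← ENNReal.rpow_mul]
    have l2 : (t * 2 ^ k)⁻¹ = t⁻¹ * (2:ℝ≥0∞) ^ (-(k:ℝ)) := by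
      rw [← ENNReal.rpow_natCast 2 k, ENNReal.mul_inv (Or.inl ht0)
        (Or.inl htt), ENNReal.rpow_neg]
    have e3 : ((2:ℝ≥0∞) ^ (δ-1)) ^ k = (2:ℝ≥0∞) ^ ((δ-1) * (k:ℝ)) := by
      rw [← ENNReal.rpow_natCast ((2:ℝ≥0∞) ^ (δ-1)) k, ← ENNReal.rpow_mul]
    have e4 : (2:ℝ≥0∞) ^ ((((k:ℝ))+1) * δ) * (2:ℝ≥0∞) ^ (-(k:ℝ))
        = (2:ℝ≥0∞) ^ δ * (2:ℝ≥0∞) ^ ((δ-1) * (k:ℝ)) := by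
      have he : (((k:ℝ))+1) * δ + (-(k:ℝ)) = δ + (δ-1) * (k:ℝ) := by ring
      rw [← ENNReal.rpow_add _ _ two_ne_zero ENNReal.ofNat_ne_top, he,
        ENNReal.rpow_add _ _ two_ne_zero ENNReal.ofNat_ne_top]
    rw [l1, l2, e3]
    calc t ^ δ * (2:ℝ≥0∞) ^ ((((k:ℝ))+1) * δ) * (K * (t⁻¹ * (2:ℝ≥0∞) ^ (-(k:ℝ))))
        = t ^ δ * t⁻¹ * K * ((2:ℝ≥0∞) ^ ((((k:ℝ))+1) * δ) * (2:ℝ≥0∞) ^ (-(k:ℝ))) := by ring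
      _ = t ^ δ * t⁻¹ * K * ((2:ℝ≥0∞) ^ δ * (2:ℝ≥0∞) ^ ((δ-1) * (k:ℝ))) := by rw [e4]
      _ = _ := by ring
  have hsum : (∑' k : ℕ, (t * 2 ^ (k+1)) ^ δ * (K * (t * 2 ^ k)⁻¹))
      = (t ^ δ * t⁻¹ * K * (2:ℝ≥0∞) ^ δ) * (1 - (2:ℝ≥0∞) ^ (δ-1))⁻¹ := by
    rw [tsum_congr hterm, ENNReal.tsum_mul_left, ENNReal.tsum_geometric]
  -- final identities
  have hQinvt : (μ Q)⁻¹ ≠ ⊤ := ENNReal.inv_ne_top.2 hQ0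
  have id1 : t ^ δ * μ Q = K ^ δ * (μ Q) ^ (1 - δ) := by
    rw [ht, ENNReal.mul_rpow_of_ne_top hKt hQinvt, ENNReal.inv_rpow, ← ENNReal.rpow_neg,
      mul_assoc]
    congr 1
    calc (μ Q) ^ (-δ) * μ Q = (μ Q) ^ (-δ) * (μ Q) ^ (1:ℝ) := by rw [ENNReal.rpow_one]
      _ = (μ Q) ^ (-δ + 1) := (ENNReal.rpow_add _ _ hQ0 hQt).symm
      _ = (μ Q) ^ (1 - δ) := by congr 1 <;> ring
  have id2 : t ^ δ * t⁻¹ * K = K ^ δ * (μ Q) ^ (1 - δ) := by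
    have ht1 : t ^ δ * t⁻¹ = t ^ (δ - 1) := by
      rw [← ENNReal.rpow_neg_one t, ← ENNReal.rpow_add _ _ ht0 htt]
      congr 1 <;> ring
    rw [ht1, ht, ENNReal.mul_rpow_of_ne_top hKt hQinvt, ENNReal.inv_rpow, ← ENNReal.rpow_neg]
    have : -(δ - 1) = 1 - δ := by ring
    rw [this]
    calc K ^ (δ-1) * (μ Q) ^ (1-δ) * K = (K * K ^ (δ-1)) * (μ Q) ^ (1-δ) := by ring
      _ = K ^ δ * (μ Q) ^ (1-δ) := by
          congr 1
          calc K * K ^ (δ-1) = K ^ (1:ℝ) * K ^ (δ-1) := by rw [ENNReal.rpow_one]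
            _ = K ^ (1 + (δ-1)) := (ENNReal.rpow_add _ _ hK0 hKt).symm
            _ = K ^ δ := by congr 1 <;> ring
  calc ∫⁻ y in Q, (h y) ^ δ ∂μ
      ≤ t ^ δ * μ Q + ∑' k : ℕ, (t * 2 ^ (k+1)) ^ δ * (K * (t * 2 ^ k)⁻¹) := hint
    _ = K ^ δ * (μ Q) ^ (1-δ) +
        (K ^ δ * (μ Q) ^ (1-δ) * ((2:ℝ≥0∞) ^ δ)) * (1 - (2:ℝ≥0∞) ^ (δ-1))⁻¹ := by
        rw [hsum, id1, id2]
    _ = (1 + 2 ^ δ * (1 - (2:ℝ≥0∞) ^ (δ - 1))⁻¹) * K ^ δ * (μ Q) ^ (1 - δ) := by ring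

lemma inv_le_c_inv {a b c : ℝ≥0∞} (hc0 : c ≠ 0) (hct : c ≠ ⊤) (h : b ≤ c * a) :
    a⁻¹ ≤ c * b⁻¹ := by
  calc a⁻¹ = c * (c⁻¹ * a⁻¹) := by
        rw [← mul_assoc, ENNReal.mul_inv_cancel hc0 hct, one_mul]
    _ = c * (c * a)⁻¹ := by rw [← ENNReal.mul_inv (Or.inl hc0) (Or.inl hct)]
    _ ≤ c * b⁻¹ := mul_le_mul' le_rfl (ENNReal.inv_le_inv.2 h)

lemma le_mul_of_inv_mul_le {b c A : ℝ≥0∞} (hb0 : b ≠ 0) (hbt : b ≠ ⊤)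
    (h : b⁻¹ * c ≤ A) : c ≤ b * A := by
  calc c = b * (b⁻¹ * c) := by rw [← mul_assoc, ENNReal.mul_inv_cancel hb0 hbt, one_mul]
    _ ≤ b * A := mul_le_mul' le_rfl h

/-- Subadditivity of `MVcube` w.r.t. splitting `f` into near and far parts. -/
lemma MVcube_subadd (ρ : EuclideanSpace ℝ (Fin n) → ℝ) (θ : ℝ)
    {f : EuclideanSpace ℝ (Fin n) → ℝ} (hfm : AEMeasurable f volume)
    (S : Set (EuclideanSpace ℝ (Fin n))) (hS : MeasurableSet S)
    (y : EuclideanSpace ℝ (Fin n)) :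
    MVcube ρ θ f y ≤ MVcube ρ θ (S.indicator f) y + MVcube ρ θ (Sᶜ.indicator f) y := by
  refine iSup_le fun z => iSup_le fun r => iSup_le fun hzr => ?_
  have hsplit : ∀ w, ENNReal.ofReal |f w| =
      ENNReal.ofReal |S.indicator f w| + ENNReal.ofReal |Sᶜ.indicator f w| := by
    intro w
    by_cases hw : w ∈ S
    · rw [Set.indicator_of_mem hw, Set.indicator_of_notMem (by simpa using hw)]; simp
    · rw [Set.indicator_of_notMem hw, Set.indicator_of_mem (by simpa using hw)]; simp
  have hmeas1 : AEMeasurable (fun w => ENNReal.ofReal |S.indicator f w|)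
      (volume.restrict (cube z r)) := by
    have h1 : AEMeasurable f (volume.restrict (cube z r)) := hfm.restrict
    have h2 : (fun w => ENNReal.ofReal |S.indicator f w|) =
        S.indicator (fun w => ENNReal.ofReal |f w|) := by
      ext w
      by_cases hw : w ∈ S
      · rw [Set.indicator_of_mem hw, Set.indicator_of_mem hw]
      · rw [Set.indicator_of_notMem hw, Set.indicator_of_notMem hw]; simp
    rw [h2]
    exact ((ENNReal.measurable_ofReal.comp_aemeasurable (by simpa [Real.norm_eq_abs] using h1.norm))).indicator hS
  have hadd : (∫⁻ w in cube z r, ENNReal.ofReal |f w|) =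
      (∫⁻ w in cube z r, ENNReal.ofReal |S.indicator f w|) +
      (∫⁻ w in cube z r, ENNReal.ofReal |Sᶜ.indicator f w|) := by
    rw [← lintegral_add_left' hmeas1]
    exact lintegral_congr fun w => hsplit w
  rw [hadd, mul_add]
  exact add_le_add
    (le_iSup_of_le z (le_iSup_of_le r (le_iSup_of_le hzr le_rfl)))
    (le_iSup_of_le z (le_iSup_of_le r (le_iSup_of_le hzr le_rfl)))

/-- The far part of the maximal function is controlled pointwise on the cube. -/
lemma MVcube_far (ρ : EuclideanSpace ℝ (Fin n) → ℝ) (hρ : ∀ x, 0 < ρ x) {θ : ℝ} (hθ : 0 < θ)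
    (f : EuclideanSpace ℝ (Fin n) → ℝ) (z : EuclideanSpace ℝ (Fin n)) {r : ℝ} (hr : 0 < r)
    {x y : EuclideanSpace ℝ (Fin n)} (hx : x ∈ cube z r) (hy : y ∈ cube z r) :
    MVcube ρ θ ((cube z (3*r))ᶜ.indicator f) y ≤
      ((3:ℝ≥0∞) ^ n * ENNReal.ofReal (3 ^ θ)) * MVcube ρ θ f x := by
  set c3 : ℝ≥0∞ := (3:ℝ≥0∞) ^ n * ENNReal.ofReal (3 ^ θ) with hc3
  have hc30 : c3 ≠ 0 := by
    rw [hc3]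
    exact mul_ne_zero (pow_ne_zero _ (by norm_num))
      (ENNReal.ofReal_pos.2 (Real.rpow_pos_of_pos (by norm_num) θ)).ne'
  have hc3t : c3 ≠ ⊤ := by
    rw [hc3]
    exact ENNReal.mul_ne_top (ENNReal.pow_ne_top (by norm_num)) ENNReal.ofReal_ne_top
  refine iSup_le fun z' => iSup_le fun r' => iSup_le fun hzr' => ?_
  obtain ⟨hr', hy'⟩ := hzr'
  by_cases hsub : cube z' r' ⊆ cube z (3*r)
  · -- the integrand vanishes on the cube
    have h0 : (∫⁻ w in cube z' r', ENNReal.ofReal |(cube z (3*r))ᶜ.indicator f w|) = 0 := by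
      rw [show (0:ℝ≥0∞) = ∫⁻ _ in cube z' r', (0:ℝ≥0∞) from (lintegral_zero).symm]
      refine setLIntegral_congr_fun (measurableSet_cube _ _) (?_)
      intro w hw
      dsimp only
      rw [Set.indicator_of_notMem (by simpa using hsub hw)]
      simp
    rw [h0, mul_zero]
    exact zero_le
  · rw [Set.not_subset] at hsub
    obtain ⟨w, hw1, hw2⟩ := hsub
    -- some coordinate of w is far from z
    have hfar : ∃ i, 3*r/2 < |w i - z i| := by
      by_contra hcon
      push_neg at hcon
      exact hw2 fun i => by linarith [hcon i]
    obtain ⟨i, hi⟩ := hfar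
    have hrr' : r < r' := by
      have h1 : |w i - z i| ≤ |w i - z' i| + |z' i - y i| + |y i - z i| := by
        calc |w i - z i| = |(w i - z' i) + (z' i - y i) + (y i - z i)| := by ring_nf
          _ ≤ _ := (abs_add_le _ _).trans (add_le_add_left (abs_add_le _ _) _)
      have h2 := hw1 i
      have h3 : |z' i - y i| ≤ r'/2 := by rw [abs_sub_comm]; exact hy' i
      have h4 := hy i
      linarith
    -- the enlarged cube
    set R := r' + 2*r with hR
    have hRpos : 0 < R := by rw [hR]; linarith
    have hsub1 : cube z' r' ⊆ cube z' R := cube_mono _ (by rw [hR]; linarith)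
    have hxR : x ∈ cube z' R := by
      intro j
      have h1 : |x j - z' j| ≤ |x j - z j| + |z j - y j| + |y j - z' j| := by
        calc |x j - z' j| = |(x j - z j) + (z j - y j) + (y j - z' j)| := by ring_nf
          _ ≤ _ := (abs_add_le _ _).trans (add_le_add_left (abs_add_le _ _) _)
      have h2 := hx j
      have h3 : |z j - y j| ≤ r/2 := by rw [abs_sub_comm]; exact hy j
      have h4 := hy' j
      rw [hR]
      linarith
    -- comparison of normalizations
    have hΨvol : ENNReal.ofReal ((1 + R / ρ z') ^ θ) * volume (cube z' R) ≤
        c3 * (ENNReal.ofReal ((1 + r' / ρ z') ^ θ) * volume (cube z' r')) := by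
      have hρ' := hρ z'
      have hvol : volume (cube z' R) ≤ (3:ℝ≥0∞) ^ n * volume (cube z' r') := by
        rw [volume_cube, volume_cube]
        calc (ENNReal.ofReal R) ^ n ≤ (ENNReal.ofReal (3*r')) ^ n := by
              refine pow_le_pow_left' (ENNReal.ofReal_le_ofReal ?_) n
              rw [hR]; linarith
          _ = 3 ^ n * (ENNReal.ofReal r') ^ n := by
              rw [ENNReal.ofReal_mul (by norm_num), mul_pow]
              norm_num
      have hΨ : ENNReal.ofReal ((1 + R / ρ z') ^ θ) ≤
          ENNReal.ofReal (3 ^ θ) * ENNReal.ofReal ((1 + r' / ρ z') ^ θ) := by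
        rw [← ENNReal.ofReal_mul (by positivity)]
        refine ENNReal.ofReal_le_ofReal ?_
        rw [← Real.mul_rpow (by norm_num) (by positivity)]
        refine Real.rpow_le_rpow (by positivity) ?_ hθ.le
        have h1 : R / ρ z' ≤ 3 * r' / ρ z' := by
          refine (div_le_div_iff_of_pos_right hρ').2 ?_
          rw [hR]; linarith
        have h2 : 0 < r' / ρ z' := div_pos (by linarith) hρ'
        rw [mul_add, mul_one]
        have h3 : 3 * (r' / ρ z') = 3 * r' / ρ z' := by ring
        linarith [h1]
      calc ENNReal.ofReal ((1 + R / ρ z') ^ θ) * volume (cube z' R)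
          ≤ (ENNReal.ofReal (3 ^ θ) * ENNReal.ofReal ((1 + r' / ρ z') ^ θ)) *
            ((3:ℝ≥0∞) ^ n * volume (cube z' r')) := mul_le_mul' hΨ hvol
        _ = c3 * (ENNReal.ofReal ((1 + r' / ρ z') ^ θ) * volume (cube z' r')) := by
            rw [hc3]; ring
    have hIle : (∫⁻ w in cube z' r', ENNReal.ofReal |(cube z (3*r))ᶜ.indicator f w|) ≤
        ∫⁻ w in cube z' R, ENNReal.ofReal |f w| := by
      refine le_trans (lintegral_mono fun w => ?_) (lintegral_mono_set hsub1)
      refine ENNReal.ofReal_le_ofReal ?_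
      by_cases hw : w ∈ (cube z (3*r))ᶜ
      · rw [Set.indicator_of_mem hw]
      · rw [Set.indicator_of_notMem hw]; simp [abs_nonneg]
    have hA : (ENNReal.ofReal ((1 + R / ρ z') ^ θ) * volume (cube z' R))⁻¹ *
        (∫⁻ w in cube z' R, ENNReal.ofReal |f w|) ≤ MVcube ρ θ f x :=
      le_iSup_of_le z' (le_iSup_of_le R (le_iSup_of_le ⟨hRpos, hxR⟩ le_rfl))
    calc (ENNReal.ofReal ((1 + r' / ρ z') ^ θ) * volume (cube z' r'))⁻¹ *
          ∫⁻ w in cube z' r', ENNReal.ofReal |(cube z (3*r))ᶜ.indicator f w|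
        ≤ (c3 * (ENNReal.ofReal ((1 + R / ρ z') ^ θ) * volume (cube z' R))⁻¹) *
          ∫⁻ w in cube z' R, ENNReal.ofReal |f w| :=
          mul_le_mul' (inv_le_c_inv hc30 hc3t hΨvol) hIle
      _ = c3 * ((ENNReal.ofReal ((1 + R / ρ z') ^ θ) * volume (cube z' R))⁻¹ *
          ∫⁻ w in cube z' R, ENNReal.ofReal |f w|) := by rw [mul_assoc]
      _ ≤ c3 * MVcube ρ θ f x := mul_le_mul' le_rfl hA

lemma bracket_le_one {b v : ℝ≥0∞} {δ : ℝ} (hδ₁ : δ < 1) (hv0 : v ≠ 0) (hvt : v ≠ ⊤)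
    (hb0 : b ≠ 0) (hbt : b ≠ ⊤) (hvb : v ≤ b) : b ^ δ * b⁻¹ * v ^ (1-δ) ≤ 1 := by
  have h1 : b ^ δ * b⁻¹ = b ^ (δ-1) := by
    rw [← ENNReal.rpow_neg_one b, ← ENNReal.rpow_add _ _ hb0 hbt]
    congr 1 <;> ring
  have h4 : ∀ w : ℝ≥0∞, w ^ (δ-1) = (w ^ (1-δ))⁻¹ := fun w => by
    rw [show δ - 1 = -(1-δ) by ring, ENNReal.rpow_neg]
  have h2 : b ^ (δ-1) ≤ v ^ (δ-1) := by
    rw [h4, h4]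
    exact ENNReal.inv_le_inv.2 (ENNReal.rpow_le_rpow hvb (by linarith))
  have h5 : v ^ (δ-1) * v ^ (1-δ) = (1:ℝ≥0∞) := by
    rw [← ENNReal.rpow_add _ _ hv0 hvt]
    norm_num
  calc b ^ δ * b⁻¹ * v ^ (1-δ) ≤ v ^ (δ-1) * v ^ (1-δ) :=
        mul_le_mul' (h1 ▸ h2) le_rfl
    _ = 1 := h5

/-- if `M_{V,θ} f` is finite a.e. and `0 < δ < 1`, then `(M_{V,θ} f)^δ`
is an `A_1^{ρ,θ}` weight. -/
theorem stmt7 {n : ℕ} (ρ : EuclideanSpace ℝ (Fin n) → ℝ) (hρ : ∀ x, 0 < ρ x)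
    (θ δ : ℝ) (hθ : 0 < θ) (hδ₀ : 0 < δ) (hδ₁ : δ < 1)
    (f : EuclideanSpace ℝ (Fin n) → ℝ) (hf : LocallyIntegrable f volume)
    (hfin : ∀ᵐ x, MVcube ρ θ f x < ⊤) :
    ∃ C : ℝ≥0∞, C ≠ ⊤ ∧
      ∀ (z : EuclideanSpace ℝ (Fin n)) (r : ℝ), 0 < r →
        ∀ᵐ x ∂(volume.restrict (cube z r)),
          (ENNReal.ofReal ((1 + r / ρ z) ^ θ) * volume (cube z r))⁻¹ *
              (∫⁻ y in cube z r, (MVcube ρ θ f y) ^ δ)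
            ≤ C * (MVcube ρ θ f x) ^ δ := by
  classical
  set Cδ : ℝ≥0∞ := 1 + 2 ^ δ * (1 - (2:ℝ≥0∞) ^ (δ - 1))⁻¹ with hCδ
  have hCδt : Cδ ≠ ⊤ := by
    rw [hCδ]
    refine ENNReal.add_ne_top.2 ⟨ENNReal.one_ne_top, ENNReal.mul_ne_top
      (ENNReal.rpow_ne_top_of_nonneg hδ₀.le ENNReal.ofNat_ne_top)
      (ENNReal.inv_ne_top.2 ?_)⟩
    exact (tsub_pos_of_lt (geom_lt_one hδ₁)).ne'
  set c3 : ℝ≥0∞ := (3:ℝ≥0∞) ^ n * ENNReal.ofReal (3 ^ θ) with hc3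
  have hc30 : c3 ≠ 0 := mul_ne_zero (pow_ne_zero _ (by norm_num))
    (ENNReal.ofReal_pos.2 (Real.rpow_pos_of_pos (by norm_num) θ)).ne'
  have hc3t : c3 ≠ ⊤ :=
    ENNReal.mul_ne_top (ENNReal.pow_ne_top (by norm_num)) ENNReal.ofReal_ne_top
  set Cmain : ℝ≥0∞ := c3 ^ δ + ((2:ℝ≥0∞) ^ n) ^ δ * Cδ * (((5:ℝ≥0∞) ^ n) * c3) ^ δ
    with hCmain
  have hCmaint : Cmain ≠ ⊤ := by
    rw [hCmain]
    refine ENNReal.add_ne_top.2 ⟨ENNReal.rpow_ne_top_of_nonneg hδ₀.le hc3t, ?_⟩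
    refine ENNReal.mul_ne_top (ENNReal.mul_ne_top
      (ENNReal.rpow_ne_top_of_nonneg hδ₀.le (ENNReal.pow_ne_top ENNReal.ofNat_ne_top)) hCδt) ?_
    exact ENNReal.rpow_ne_top_of_nonneg hδ₀.le
      (ENNReal.mul_ne_top (ENNReal.pow_ne_top (by norm_num)) hc3t)
  refine ⟨Cmain, hCmaint, ?_⟩
  intro z r hr
  filter_upwards [ae_restrict_mem (measurableSet_cube z r)] with x hx
  -- notation
  set S := cube z (3*r) with hS
  set f1 := S.indicator f with hf1def
  set A := MVcube ρ θ f x with hA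
  set Ψ : ℝ≥0∞ := ENNReal.ofReal ((1 + r / ρ z) ^ θ) with hΨdef
  have hone : (1:ℝ) ≤ 1 + r / ρ z := by
    have := div_pos hr (hρ z); linarith
  have hΨ1 : (1:ℝ≥0∞) ≤ Ψ := by
    rw [hΨdef, show (1:ℝ≥0∞) = ENNReal.ofReal 1 by simp]
    exact ENNReal.ofReal_le_ofReal (Real.one_le_rpow hone hθ.le)
  have hΨ0 : Ψ ≠ 0 := by
    intro h; rw [h] at hΨ1; simp at hΨ1
  have hΨt : Ψ ≠ ⊤ := ENNReal.ofReal_ne_top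
  have hv0 : volume (cube z r) ≠ 0 := by
    rw [volume_cube]; exact pow_ne_zero _ (ENNReal.ofReal_pos.2 hr).ne'
  have hvt : volume (cube z r) ≠ ⊤ := by
    rw [volume_cube]; exact ENNReal.pow_ne_top ENNReal.ofReal_ne_top
  have hb0 : Ψ * volume (cube z r) ≠ 0 := mul_ne_zero hΨ0 hv0
  have hbt : Ψ * volume (cube z r) ≠ ⊤ := ENNReal.mul_ne_top hΨt hvt
  have hfm : AEMeasurable f volume := hf.aestronglyMeasurable.aemeasurable
  have hmeasMq : Measurable fun y => ((2:ℝ≥0∞)^n * Mq f1 y) ^ δ :=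
    (measurable_const.mul (measurable_Mq f1)).pow_const δ
  -- pointwise bound
  have hpoint : ∀ y ∈ cube z r,
      (MVcube ρ θ f y) ^ δ ≤ ((2:ℝ≥0∞)^n * Mq f1 y) ^ δ + (c3 * A) ^ δ := by
    intro y hy
    have h1 : MVcube ρ θ f y ≤ (2:ℝ≥0∞)^n * Mq f1 y + c3 * A := by
      calc MVcube ρ θ f y
          ≤ MVcube ρ θ f1 y + MVcube ρ θ (Sᶜ.indicator f) y :=
            MVcube_subadd ρ θ hfm S (measurableSet_cube _ _) y
        _ ≤ (2:ℝ≥0∞)^n * Mq f1 y + c3 * A :=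
            add_le_add (MVcube_le_Mq ρ hρ θ hθ.le f1 y)
              (MVcube_far ρ hρ hθ f z hr hx hy)
    calc (MVcube ρ θ f y) ^ δ ≤ ((2:ℝ≥0∞)^n * Mq f1 y + c3 * A) ^ δ :=
          ENNReal.rpow_le_rpow h1 hδ₀.le
      _ ≤ _ := ENNReal.rpow_add_le_add_rpow _ _ hδ₀.le hδ₁.le
  -- integral bound
  have hint1 : (∫⁻ y in cube z r, (MVcube ρ θ f y) ^ δ) ≤
      ((2:ℝ≥0∞)^n)^δ * (∫⁻ y in cube z r, (Mq f1 y) ^ δ) +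
        (c3 * A) ^ δ * volume (cube z r) := by
    calc (∫⁻ y in cube z r, (MVcube ρ θ f y) ^ δ)
        ≤ ∫⁻ y in cube z r, (((2:ℝ≥0∞)^n * Mq f1 y) ^ δ + (c3 * A) ^ δ) :=
          setLIntegral_mono' (measurableSet_cube z r) hpoint
      _ = (∫⁻ y in cube z r, ((2:ℝ≥0∞)^n * Mq f1 y) ^ δ) +
            (c3*A)^δ * volume (cube z r) := by
          rw [lintegral_add_left hmeasMq, setLIntegral_const]
      _ = _ := by
          congr 1
          simp_rw [ENNReal.mul_rpow_of_nonneg _ _ hδ₀.le]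
          rw [lintegral_const_mul _ ((measurable_Mq f1).pow_const δ)]
  -- the L¹ norm of the near part
  set I1 := ∫⁻ w, ENNReal.ofReal |f1 w| with hI1
  have hI1eq : I1 = ∫⁻ w in S, ENNReal.ofReal |f w| := by
    rw [hI1, ← lintegral_indicator (measurableSet_cube _ _)]
    refine lintegral_congr fun w => ?_
    by_cases hw : w ∈ S
    · rw [hf1def, Set.indicator_of_mem hw, Set.indicator_of_mem hw]
    · rw [hf1def, Set.indicator_of_notMem hw, Set.indicator_of_notMem hw]; simp
  have hI1t : I1 ≠ ⊤ := by
    have hint := (hf.integrableOn_isCompact (isCompact_cube z (3*r))).2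
    rw [hasFiniteIntegral_iff_norm] at hint
    rw [hI1eq]
    refine ne_of_lt (lt_of_le_of_lt (le_of_eq ?_) hint)
    refine lintegral_congr fun w => ?_
    rw [Real.norm_eq_abs]
  -- Kolmogorov bound
  have hkol : (∫⁻ y in cube z r, (Mq f1 y)^δ) ≤
      Cδ * ((5:ℝ≥0∞)^n * I1)^δ * (volume (cube z r))^(1-δ) := by
    by_cases hI10 : I1 = 0
    · have hMq0 : ∀ y, Mq f1 y = 0 := by
        intro y
        refine le_antisymm (iSup_le fun p => ?_) (zero_le)
        by_cases hyp : y ∈ rcube p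
        · rw [Set.indicator_of_mem hyp]
          have h0 : (∫⁻ w in rcube p, ENNReal.ofReal |f1 w|) = 0 := by
            refine le_antisymm ?_ (zero_le)
            calc (∫⁻ w in rcube p, ENNReal.ofReal |f1 w|)
                ≤ ∫⁻ w, ENNReal.ofReal |f1 w| := by
                  exact (lintegral_mono_set (Set.subset_univ _)).trans
                    (by rw [Measure.restrict_univ])
              _ = 0 := by rw [← hI1, hI10]
          rw [h0, mul_zero]
        · rw [Set.indicator_of_notMem hyp]
      calc (∫⁻ y in cube z r, (Mq f1 y)^δ) = ∫⁻ _ in cube z r, (0:ℝ≥0∞) := by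
            refine lintegral_congr fun y => ?_
            rw [hMq0 y, ENNReal.zero_rpow_of_pos hδ₀]
        _ = 0 := lintegral_zero
        _ ≤ _ := zero_le
    · refine kolmogorov (measurable_Mq f1)
        (mul_ne_zero (pow_ne_zero _ (by norm_num)) hI10)
        (ENNReal.mul_ne_top (ENNReal.pow_ne_top (by norm_num)) hI1t) ?_ hv0 hvt hδ₀ hδ₁
      intro lam hl0 hlt
      calc volume {w | lam < Mq f1 w} ≤ 5^n * lam⁻¹ * I1 := weak11_Mq f1 hl0 hlt
        _ = 5^n * I1 * lam⁻¹ := by ring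
  -- the L¹ norm is controlled by A
  have hI1le : I1 ≤ c3 * (Ψ * volume (cube z r)) * A := by
    have hxS : x ∈ S := cube_mono z (by linarith) hx
    set ΨS : ℝ≥0∞ := ENNReal.ofReal ((1 + 3*r / ρ z)^θ) with hΨS
    have hA3 : (ΨS * volume S)⁻¹ * (∫⁻ w in S, ENNReal.ofReal |f w|) ≤ A :=
      le_iSup_of_le z (le_iSup_of_le (3*r) (le_iSup_of_le ⟨by linarith, hxS⟩ le_rfl))
    have hρz := hρ z
    have hbS0 : ΨS * volume S ≠ 0 := by
      refine mul_ne_zero ?_ ?_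
      · refine (ENNReal.ofReal_pos.2 (Real.rpow_pos_of_pos ?_ θ)).ne'
        have := div_pos (show (0:ℝ) < 3*r by linarith) hρz
        linarith
      · rw [hS, volume_cube]
        exact pow_ne_zero _ (ENNReal.ofReal_pos.2 (by linarith)).ne'
    have hbSt : ΨS * volume S ≠ ⊤ := by
      refine ENNReal.mul_ne_top ENNReal.ofReal_ne_top ?_
      rw [hS, volume_cube]
      exact ENNReal.pow_ne_top ENNReal.ofReal_ne_top
    have h1 : I1 ≤ (ΨS * volume S) * A := by
      rw [hI1eq]
      exact le_mul_of_inv_mul_le hbS0 hbSt hA3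
    have h2 : ΨS * volume S ≤ c3 * (Ψ * volume (cube z r)) := by
      have hvolS : volume S = (3:ℝ≥0∞)^n * volume (cube z r) := by
        rw [hS, volume_cube, volume_cube, ENNReal.ofReal_mul (by norm_num), mul_pow]
        norm_num
      have hΨSle : ΨS ≤ ENNReal.ofReal (3^θ) * Ψ := by
        rw [hΨS, hΨdef, ← ENNReal.ofReal_mul (by positivity)]
        refine ENNReal.ofReal_le_ofReal ?_
        rw [← Real.mul_rpow (by norm_num) (by positivity)]
        refine Real.rpow_le_rpow (by positivity) ?_ hθ.le
        have hq := div_pos hr hρz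
        have h3 : 3*r / ρ z = 3*(r/ρ z) := by ring
        rw [h3]
        nlinarith [hq]
      calc ΨS * volume S ≤ (ENNReal.ofReal (3^θ) * Ψ) * ((3:ℝ≥0∞)^n * volume (cube z r)) := by
            rw [hvolS]; exact mul_le_mul' hΨSle le_rfl
        _ = c3 * (Ψ * volume (cube z r)) := by rw [hc3]; ring
    calc I1 ≤ (ΨS * volume S) * A := h1
      _ ≤ (c3 * (Ψ * volume (cube z r))) * A := mul_le_mul' h2 le_rfl
  -- combine
  have hK : ((5:ℝ≥0∞)^n * I1) ^ δ ≤
      (((5:ℝ≥0∞)^n * c3) ^ δ * (Ψ * volume (cube z r)) ^ δ) * A ^ δ := by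
    have h1 : (5:ℝ≥0∞)^n * I1 ≤ ((5:ℝ≥0∞)^n * c3) * (Ψ * volume (cube z r)) * A := by
      calc (5:ℝ≥0∞)^n * I1 ≤ 5^n * (c3 * (Ψ * volume (cube z r)) * A) :=
            mul_le_mul' le_rfl hI1le
        _ = _ := by ring
    calc ((5:ℝ≥0∞)^n * I1)^δ
        ≤ (((5:ℝ≥0∞)^n * c3) * (Ψ * volume (cube z r)) * A)^δ :=
          ENNReal.rpow_le_rpow h1 hδ₀.le
      _ = _ := by
          rw [ENNReal.mul_rpow_of_nonneg _ _ hδ₀.le, ENNReal.mul_rpow_of_nonneg _ _ hδ₀.le]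
  have hbrk : (Ψ * volume (cube z r))^δ * (Ψ * volume (cube z r))⁻¹ *
      (volume (cube z r))^(1-δ) ≤ 1 :=
    bracket_le_one hδ₁ hv0 hvt hb0 hbt (le_mul_of_one_le_left (zero_le) hΨ1)
  have hsecond : (Ψ * volume (cube z r))⁻¹ * ((c3 * A)^δ * volume (cube z r)) ≤
      c3^δ * A^δ := by
    have hin : (Ψ * volume (cube z r))⁻¹ ≤ (volume (cube z r))⁻¹ :=
      ENNReal.inv_le_inv.2 (le_mul_of_one_le_left (zero_le) hΨ1)
    calc (Ψ * volume (cube z r))⁻¹ * ((c3*A)^δ * volume (cube z r))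
        ≤ (volume (cube z r))⁻¹ * ((c3*A)^δ * volume (cube z r)) := mul_le_mul' hin le_rfl
      _ = (c3*A)^δ * ((volume (cube z r))⁻¹ * volume (cube z r)) := by ring
      _ = (c3*A)^δ := by rw [ENNReal.inv_mul_cancel hv0 hvt, mul_one]
      _ = c3^δ * A^δ := ENNReal.mul_rpow_of_nonneg _ _ hδ₀.le
  have hfirst : (Ψ * volume (cube z r))⁻¹ *
      (((2:ℝ≥0∞)^n)^δ * (Cδ * ((5:ℝ≥0∞)^n*I1)^δ * (volume (cube z r))^(1-δ))) ≤
      ((2:ℝ≥0∞)^n)^δ * Cδ * (((5:ℝ≥0∞)^n) * c3)^δ * A^δ := by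
    calc (Ψ * volume (cube z r))⁻¹ *
        (((2:ℝ≥0∞)^n)^δ * (Cδ * ((5:ℝ≥0∞)^n*I1)^δ * (volume (cube z r))^(1-δ)))
        ≤ (Ψ * volume (cube z r))⁻¹ * (((2:ℝ≥0∞)^n)^δ *
            (Cδ * ((((5:ℝ≥0∞)^n * c3)^δ * (Ψ * volume (cube z r))^δ) * A^δ) *
              (volume (cube z r))^(1-δ))) :=
          mul_le_mul' le_rfl (mul_le_mul' le_rfl
            (mul_le_mul' (mul_le_mul' le_rfl hK) le_rfl))
      _ = (((2:ℝ≥0∞)^n)^δ * Cδ * (((5:ℝ≥0∞)^n) * c3)^δ * A^δ) *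
            ((Ψ * volume (cube z r))^δ * (Ψ * volume (cube z r))⁻¹ *
              (volume (cube z r))^(1-δ)) := by ring
      _ ≤ (((2:ℝ≥0∞)^n)^δ * Cδ * (((5:ℝ≥0∞)^n) * c3)^δ * A^δ) * 1 :=
          mul_le_mul' le_rfl hbrk
      _ = _ := by rw [mul_one]
  calc (Ψ * volume (cube z r))⁻¹ * (∫⁻ y in cube z r, (MVcube ρ θ f y) ^ δ)
      ≤ (Ψ * volume (cube z r))⁻¹ *
          (((2:ℝ≥0∞)^n)^δ * (∫⁻ y in cube z r, (Mq f1 y)^δ) +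
            (c3*A)^δ * volume (cube z r)) := mul_le_mul' le_rfl hint1
    _ ≤ (Ψ * volume (cube z r))⁻¹ *
          (((2:ℝ≥0∞)^n)^δ * (Cδ * ((5:ℝ≥0∞)^n*I1)^δ * (volume (cube z r))^(1-δ)) +
            (c3*A)^δ * volume (cube z r)) :=
        mul_le_mul' le_rfl (add_le_add (mul_le_mul' le_rfl hkol) le_rfl)
    _ = (Ψ * volume (cube z r))⁻¹ *
          (((2:ℝ≥0∞)^n)^δ * (Cδ * ((5:ℝ≥0∞)^n*I1)^δ * (volume (cube z r))^(1-δ))) +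
        (Ψ * volume (cube z r))⁻¹ * ((c3*A)^δ * volume (cube z r)) := mul_add _ _ _
    _ ≤ ((2:ℝ≥0∞)^n)^δ * Cδ * (((5:ℝ≥0∞)^n) * c3)^δ * A^δ + c3^δ * A^δ :=
        add_le_add hfirst hsecond
    _ = Cmain * A^δ := by rw [hCmain]; ring
end
end
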